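/- For every integer n ≥ 0 and every k ∈ ℤ, the n-th coefficient of the formal power series ∑_{m=0}^{n} L(X)^m / (m! · (αm + a)^{k}) in ℂ⟦X⟧, where L(X) = ∑_{j≥1} (-1)^{j-1} X^j / j is the formal logarithm log(1+X), multiplied by n!, equals (-1)^n ∑_{m=0}^{n} (-1)^m · [n m] · (αm + a)^{-k}. (Since L(X)^m has X-adic order m, the terms with m > n contribute nothing to the coefficient of X^n, so this finite sum computes the coefficient of X^n in the generating function Φ_f(ln(1+t), k, α, a) = ∑_{m=0}^{∞} (ln(1+t))^m/(m!(αm+a)^k) of the two-parameter Hurwitz-Lerch type poly-Cauchy numbers of the first kind.) -/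

import Mathlib

open PowerSeries Finset

/-- Unsigned Stirling numbers of the first kind. -/
def stirling1 : ℕ → ℕ → ℕ
  | 0, 0 => 1
  | 0, _ + 1 => 0
  | _ + 1, 0 => 0
  | n + 1, m + 1 => stirling1 n m + n * stirling1 n (m + 1)

/-- Stirling numbers of the second kind. -/
def stirling2 : ℕ → ℕ → ℕ
  | 0, 0 => 1
  | 0, _ + 1 => 0
  | _ + 1, 0 => 0
  | n + 1, m + 1 => stirling2 n m + (m + 1) * stirling2 n (m + 1)

/-- Two-parameter Hurwitz-Lerch type poly-Bernoulli numbers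
    `B_n^{(k)}(α,a) = (-1)^n ∑_{m=0}^n (-1)^m m! {n m} (αm+a)^{-k}`. -/
noncomputable def polyBernoulli (k : ℤ) (α a : ℂ) (n : ℕ) : ℂ :=
  (-1 : ℂ) ^ n * ∑ m ∈ Finset.range (n + 1),
    (-1 : ℂ) ^ m * (m.factorial : ℂ) * (stirling2 n m : ℂ) * (α * m + a) ^ (-k)

/-- Two-parameter Hurwitz-Lerch type poly-Cauchy numbers of the first kind
    `c_n^{(k)}(α,a) = (-1)^n ∑_{m=0}^n (-1)^m [n m] (αm+a)^{-k}`. -/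
noncomputable def polyCauchy1 (k : ℤ) (α a : ℂ) (n : ℕ) : ℂ :=
  (-1 : ℂ) ^ n * ∑ m ∈ Finset.range (n + 1),
    (-1 : ℂ) ^ m * (stirling1 n m : ℂ) * (α * m + a) ^ (-k)

/-- Two-parameter Hurwitz-Lerch type poly-Cauchy numbers of the second kind
    `ĉ_n^{(k)}(α,a) = (-1)^n ∑_{m=0}^n [n m] (αm+a)^{-k}`. -/
noncomputable def polyCauchy2 (k : ℤ) (α a : ℂ) (n : ℕ) : ℂ :=
  (-1 : ℂ) ^ n * ∑ m ∈ Finset.range (n + 1),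
    (stirling1 n m : ℂ) * (α * m + a) ^ (-k)

/-- The formal power series `log(1+X) = ∑_{j≥1} (-1)^{j-1} X^j / j` in `ℂ⟦X⟧`. -/
noncomputable def formalLog : PowerSeries ℂ :=
  PowerSeries.mk fun j => if j = 0 then 0 else (-1 : ℂ) ^ (j - 1) / j

lemma coeff_dlog (n : ℕ) : coeff n (d⁄dX ℂ formalLog) = (-1 : ℂ) ^ n := by
  rw [PowerSeries.coeff_derivative, formalLog, coeff_mk]
  simp only [Nat.add_eq_zero, one_ne_zero, and_false, if_false, Nat.add_sub_cancel]
  push_cast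
  rw [div_mul_cancel₀ _ (Nat.cast_add_one_ne_zero n)]

lemma one_add_X_mul_dlog : ((1 : ℂ⟦X⟧) + X) * d⁄dX ℂ formalLog = 1 := by
  ext n
  rw [add_mul, one_mul, map_add]
  cases n with
  | zero => simp [coeff_dlog]
  | succ n =>
    rw [PowerSeries.coeff_succ_X_mul, coeff_dlog, coeff_dlog, coeff_one]
    simp [pow_succ]

lemma constCoeff_log : constantCoeff formalLog = 0 := by
  rw [formalLog, ← coeff_zero_eq_constantCoeff, coeff_mk]; simp

lemma coeff_one_add_X_mul_d (g : ℂ⟦X⟧) (n : ℕ) :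
    coeff n (((1 : ℂ⟦X⟧) + X) * d⁄dX ℂ g) =
      ((n : ℂ) + 1) * coeff (n + 1) g + n * coeff n g := by
  rw [add_mul, one_mul, map_add, PowerSeries.coeff_derivative]
  cases n with
  | zero =>
    simp [coeff_zero_eq_constantCoeff, map_mul, mul_comm]
  | succ j =>
    rw [PowerSeries.coeff_succ_X_mul, PowerSeries.coeff_derivative]
    push_cast; ring

lemma log_pow_rec (n m : ℕ) :
    ((n : ℂ) + 1) * coeff (n + 1) (formalLog ^ (m + 1)) +
      n * coeff n (formalLog ^ (m + 1)) =
    ((m : ℂ) + 1) * coeff n (formalLog ^ m) := by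
  have h1 : ((1 : ℂ⟦X⟧) + X) * d⁄dX ℂ (formalLog ^ (m + 1)) = (m + 1) • formalLog ^ m := by
    rw [Derivation.leibniz_pow, Nat.add_sub_cancel, smul_eq_mul, mul_smul_comm,
      mul_left_comm, one_add_X_mul_dlog, mul_one]
  have h2 := congrArg (coeff n) h1
  rw [coeff_one_add_X_mul_d, map_nsmul, nsmul_eq_mul] at h2
  rw [h2]; push_cast; ring

lemma key_coeff (n : ℕ) : ∀ m : ℕ, (n.factorial : ℂ) * coeff n (formalLog ^ m) =
    (-1 : ℂ) ^ (n + m) * m.factorial * stirling1 n m := by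
  induction n with
  | zero =>
    intro m
    cases m with
    | zero => simp [stirling1]
    | succ m =>
      rw [coeff_zero_eq_constantCoeff, map_pow, constCoeff_log]
      simp [stirling1]
  | succ n ih =>
    intro m
    cases m with
    | zero =>
      simp only [pow_zero, coeff_one, Nat.add_one_ne_zero, if_false]
      simp [stirling1]
    | succ m =>
      have R := log_pow_rec n m
      have e1 : ((n : ℂ) + 1) * coeff (n + 1) (formalLog ^ (m + 1)) =
          ((m : ℂ) + 1) * coeff n (formalLog ^ m) -
            n * coeff n (formalLog ^ (m + 1)) := eq_sub_of_add_eq R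
      have e2 : ((n + 1).factorial : ℂ) * coeff (n + 1) (formalLog ^ (m + 1)) =
          (n.factorial : ℂ) * (((n : ℂ) + 1) * coeff (n + 1) (formalLog ^ (m + 1))) := by
        rw [Nat.factorial_succ]; push_cast; ring
      rw [e2, e1, mul_sub]
      have e3 : (n.factorial : ℂ) * (((m : ℂ) + 1) * coeff n (formalLog ^ m)) =
          ((m : ℂ) + 1) * ((n.factorial : ℂ) * coeff n (formalLog ^ m)) := by ring
      have e4 : (n.factorial : ℂ) * ((n : ℂ) * coeff n (formalLog ^ (m + 1))) =
          (n : ℂ) * ((n.factorial : ℂ) * coeff n (formalLog ^ (m + 1))) := by ring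
      rw [e3, e4, ih m, ih (m + 1)]
      have hs : (stirling1 (n + 1) (m + 1) : ℂ) =
          (stirling1 n m : ℂ) + (n : ℂ) * stirling1 n (m + 1) := by
        rw [show stirling1 (n + 1) (m + 1) = stirling1 n m + n * stirling1 n (m + 1) from rfl]
        push_cast; ring
      rw [hs, Nat.factorial_succ]
      push_cast; ring

theorem stmt1 (α a : ℂ) (hα : α ≠ 0) (ha : ∀ m : ℕ, α * m + a ≠ 0) (n : ℕ) (k : ℤ) :
    (n.factorial : ℂ) * PowerSeries.coeff n
      (∑ m ∈ Finset.range (n + 1),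
        PowerSeries.C (((m.factorial : ℂ) * (α * m + a) ^ k)⁻¹) * formalLog ^ m) =
    (-1 : ℂ) ^ n * ∑ m ∈ Finset.range (n + 1),
      (-1 : ℂ) ^ m * (stirling1 n m : ℂ) * (α * m + a) ^ (-k) := by
  rw [map_sum, Finset.mul_sum, Finset.mul_sum]
  refine Finset.sum_congr rfl fun m _ => ?_
  rw [PowerSeries.coeff_C_mul, mul_left_comm, key_coeff n m]
  have hf : (m.factorial : ℂ) ≠ 0 := Nat.cast_ne_zero.mpr m.factorial_ne_zero
  have hz : ((α * m + a) ^ k : ℂ) ≠ 0 := zpow_ne_zero k (ha m)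
  rw [zpow_neg, mul_inv, pow_add]
  field_simp
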